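/- Let f : X → Y be a map between cellular multipointed d-spaces. Then f is a globular subdivision (i.e. induces a homeomorphism |X| ≅ |Y| of underlying spaces) if and only if the induced map of directed spaces Sp(f) : Sp(X) → Sp(Y) is an isomorphism. -/

import Mathlib

/- STATEMENT 18: Let f : X → Y be a map between cellular multipointed d-spaces. Then f
is a globular subdivision (i.e. induces a homeomorphism |X| ≅ |Y|) iff the induced map
Sp(f) : Sp(X) → Sp(Y) is an isomorphism of directed spaces. -/

open Set unitInterval Topology

noncomputable section

variable {α : Type*} {β : Type*} [TopologicalSpace α] [TopologicalSpace β]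

/-- Clamp a real number into the unit interval. -/
def toI (t : ℝ) : I := Set.projIcc 0 1 zero_le_one t

/-- Normalized composition of two paths parametrized by [0,1]. -/
def normComp (γ₁ γ₂ : I → α) : I → α :=
  fun t => if (t : ℝ) ≤ 1 / 2 then γ₁ (toI (2 * (t : ℝ))) else γ₂ (toI (2 * (t : ℝ) - 1))

/-- An element of `M(1,1)`: a non-decreasing (continuous) surjection of [0,1]. -/
def IsReparam (φ : I → I) : Prop := Monotone φ ∧ Function.Surjective φ ∧ Continuous φ

/-- An element of `𝓘(1)`: a non-decreasing continuous map [0,1] → [0,1],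
not necessarily surjective. -/
def IsNondecreasing (φ : I → I) : Prop := Monotone φ ∧ Continuous φ

/-- A multipointed d-space: a space, a set of states, and a set of execution paths with
endpoints in the states, closed under non-decreasing surjective reparametrization and
under normalized composition. -/
structure MultipointedDSpace (α : Type*) [TopologicalSpace α] where
  states : Set α
  exec : Set (I → α)
  exec_cont : ∀ γ ∈ exec, Continuous γ
  exec_src : ∀ γ ∈ exec, γ 0 ∈ states
  exec_tgt : ∀ γ ∈ exec, γ 1 ∈ states
  exec_reparam : ∀ γ ∈ exec, ∀ φ : I → I, IsReparam φ → γ ∘ φ ∈ exec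
  exec_norm : ∀ γ₁ ∈ exec, ∀ γ₂ ∈ exec, γ₁ 1 = γ₂ 0 → normComp γ₁ γ₂ ∈ exec

/-- Moore composition of a path of length `ℓ₁` with a second path. -/
def mooreComp (ℓ₁ : ℝ) (f g : ℝ → α) : ℝ → α := fun t => if t ≤ ℓ₁ then f t else g (t - ℓ₁)

/-- `(n+1)`-fold Moore composition with prescribed lengths. -/
def mooreCompN : (n : ℕ) → (Fin (n + 1) → ℝ) → (Fin (n + 1) → ℝ → α) → ℝ → α
  | 0, _, f => f 0
  | n + 1, ℓ, f =>
      mooreComp (ℓ 0) (f 0) (mooreCompN n (fun i => ℓ i.succ) (fun i => f i.succ))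

/-- `d(X)`: the set of all constant paths together with all Moore compositions
`(γ₁∘φ₁∘μ_{ℓ₁}) * ⋯ * (γₙ∘φₙ∘μ_{ℓₙ})` with `Σ ℓᵢ = 1`, where the `γᵢ` are execution
paths and the `φᵢ` are non-decreasing continuous self-maps of [0,1]
(`μ_ℓ(t) = t/ℓ`). -/
def dPaths (X : MultipointedDSpace α) : Set (I → α) :=
  {Γ | (∃ x, ∀ t, Γ t = x) ∨
    ∃ (n : ℕ) (ℓ : Fin (n + 1) → ℝ) (γ : Fin (n + 1) → I → α) (φ : Fin (n + 1) → I → I),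
      (∀ i, 0 < ℓ i) ∧ (∑ i, ℓ i = 1) ∧ (∀ i, γ i ∈ X.exec) ∧
      (∀ i, IsNondecreasing (φ i)) ∧
      ∀ t : I, Γ t = mooreCompN n ℓ (fun i s => γ i (φ i (toI (s / ℓ i)))) (t : ℝ)}

/-- A globular cell of a multipointed d-space `X`, of dimension `n + 1`: the data of an
attaching map `Glob^top(D^n) → X` (written as `g : D^n × [0,1] → α`, constant on
`D^n × {0}` and on `D^n × {1}`), injective on the open part, whose longitudinal paths
are execution paths of `X`. -/
structure GlobularCell (X : MultipointedDSpace α) where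
  n : ℕ
  g : EuclideanSpace ℝ (Fin n) → I → α
  src : α
  tgt : α
  src_mem : src ∈ X.states
  tgt_mem : tgt ∈ X.states
  g_src : ∀ z : EuclideanSpace ℝ (Fin n), ‖z‖ ≤ 1 → g z 0 = src
  g_tgt : ∀ z : EuclideanSpace ℝ (Fin n), ‖z‖ ≤ 1 → g z 1 = tgt
  g_cont : ContinuousOn (fun p : EuclideanSpace ℝ (Fin n) × I => g p.1 p.2)
    ((Metric.closedBall 0 1) ×ˢ univ)
  exec_mem : ∀ z : EuclideanSpace ℝ (Fin n), ‖z‖ ≤ 1 → (fun t => g z t) ∈ X.exec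
  g_inj : ∀ (z z' : EuclideanSpace ℝ (Fin n)) (t t' : I), ‖z‖ < 1 → ‖z'‖ < 1 →
    0 < (t : ℝ) → (t : ℝ) < 1 → 0 < (t' : ℝ) → (t' : ℝ) < 1 →
    g z t = g z' t' → z = z' ∧ t = t'

/-- The (open) globular cell: the image of `|Glob(D^n)| ∖ |Glob(S^{n-1})|`. -/
def GlobularCell.openCell {X : MultipointedDSpace α} (c : GlobularCell X) : Set α :=
  {x | ∃ (z : EuclideanSpace ℝ (Fin c.n)) (t : I),
    ‖z‖ < 1 ∧ 0 < (t : ℝ) ∧ (t : ℝ) < 1 ∧ c.g z t = x}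

/-- A cellular multipointed d-space: a multipointed d-space obtained by (transfinitely)
attaching globular cells to its set of states. The underlying space is Hausdorff, it is
partitioned into the states and the open globular cells, and every execution path
decomposes (uniquely) as its globular naturalization — a Moore composition of
longitudinal cell paths, each of length 1 — precomposed with a non-decreasing
continuous surjection [0,1] → [0,n+1]. -/
structure CellularMDSpace (α : Type*) [TopologicalSpace α]
    extends MultipointedDSpace α where
  t2 : T2Space α
  ι : Type*
  cell : ι → GlobularCell toMultipointedDSpace
  cell_disjoint : Pairwise fun i j => Disjoint (cell i).openCell (cell j).openCell
  cell_states_disjoint : ∀ i, Disjoint (cell i).openCell states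
  cell_cover : states ∪ ⋃ i, (cell i).openCell = univ
  exec_decomp : ∀ γ ∈ exec, ∃ (n : ℕ) (c : Fin (n + 1) → ι)
      (z : ∀ i : Fin (n + 1), EuclideanSpace ℝ (Fin (cell (c i)).n)) (φ : I → ℝ),
      (∀ i, ‖z i‖ < 1) ∧ Monotone φ ∧ Continuous φ ∧
      φ 0 = 0 ∧ φ 1 = (n + 1 : ℝ) ∧
      ∀ t : I, γ t = mooreCompN n (fun _ => 1)
        (fun i s => (cell (c i)).g (z i) (toI s)) (φ t)

/-- A morphism of multipointed d-spaces. -/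
def IsMDMap (X : MultipointedDSpace α) (Y : MultipointedDSpace β) (f : α → β) : Prop :=
  Continuous f ∧ MapsTo f X.states Y.states ∧ ∀ γ ∈ X.exec, f ∘ γ ∈ Y.exec

/-! ### Auxiliary lemmas -/

set_option linter.unusedSectionVars false
set_option linter.unusedVariables false

section Aux

lemma toI_coe (s : I) : toI (s : ℝ) = s := Set.projIcc_val zero_le_one s

lemma toI_monotone : Monotone toI := Set.monotone_projIcc zero_le_one

lemma toI_continuous : Continuous toI := @continuous_projIcc ℝ _ 0 1 zero_le_one _ _

lemma toI_of_mem {x : ℝ} (h0 : 0 ≤ x) (h1 : x ≤ 1) : (toI x : ℝ) = x := by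
  rw [toI, Set.projIcc_of_mem zero_le_one ⟨h0, h1⟩]

lemma toI_zero : toI 0 = 0 := by rw [toI, projIcc_left]; rfl

lemma toI_one : toI 1 = 1 := by rw [toI, projIcc_right]; rfl

lemma mooreCompN_map (g : α → β) : ∀ (n : ℕ) (ℓ : Fin (n+1) → ℝ) (F : Fin (n+1) → ℝ → α)
    (t : ℝ), g (mooreCompN n ℓ F t) = mooreCompN n ℓ (fun i s => g (F i s)) t := by
  intro n
  induction n with
  | zero => intro ℓ F t; rfl
  | succ n ih =>
    intro ℓ F t
    simp only [mooreCompN, mooreComp]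
    split
    · rfl
    · exact ih _ _ _

lemma mooreCompN_congr : ∀ (n : ℕ) (ℓ : Fin (n+1) → ℝ) (F G : Fin (n+1) → ℝ → α)
    (h : ∀ i s, F i s = G i s) (t : ℝ), mooreCompN n ℓ F t = mooreCompN n ℓ G t := by
  intro n
  induction n with
  | zero => intro ℓ F G h t; exact h 0 t
  | succ n ih =>
    intro ℓ F G h t
    simp only [mooreCompN, mooreComp]
    split
    · exact h 0 t
    · exact ih _ _ _ (fun i s => h i.succ s) _

lemma mooreCompN_unit_first {n : ℕ} (F : Fin (n+1) → ℝ → α) {u : ℝ} (hu : u ≤ 1) :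
    mooreCompN n (fun _ => 1) F u = F 0 u := by
  cases n with
  | zero => rfl
  | succ n => simp only [mooreCompN, mooreComp, if_pos hu]

lemma mooreCompN_unit_piece : ∀ (n : ℕ) (F : Fin (n+1) → ℝ → α) (j : Fin (n+1)) {u : ℝ},
    ((j : ℝ) < u) → (u ≤ (j : ℝ) + 1) →
    mooreCompN n (fun _ => 1) F u = F j (u - (j : ℝ)) := by
  intro n
  induction n with
  | zero =>
    intro F j u h1 h2
    have : j = 0 := Fin.fin_one_eq_zero j
    subst this
    simp only [mooreCompN, Fin.val_zero, Nat.cast_zero, sub_zero]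
  | succ n ih =>
    intro F j u h1 h2
    refine Fin.cases ?_ ?_ j h1 h2
    · intro h1 h2
      simp only [Fin.val_zero, Nat.cast_zero, zero_add] at h1 h2
      simp only [mooreCompN, mooreComp, if_pos h2, sub_zero, Fin.val_zero, Nat.cast_zero]
    · intro j' h1 h2
      have hj : ((j'.succ : Fin (n+2)) : ℝ) = (j' : ℝ) + 1 := by
        push_cast [Fin.val_succ]; ring
      rw [hj] at h1 h2
      have hu1 : ¬ u ≤ 1 := by
        push_neg
        have : (0:ℝ) ≤ (j' : ℝ) := by positivity
        linarith
      simp only [mooreCompN, mooreComp, if_neg hu1]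
      have := ih (fun i => F i.succ) j' (u := u - 1) (by linarith) (by linarith)
      rw [this, hj]
      ring_nf

/-- A continuous strictly monotone map `I → ℝ` with prescribed endpoints admits a
monotone continuous section. -/
lemma exists_section {θ : I → ℝ} (hsm : StrictMono θ) (hcont : Continuous θ)
    {K : ℝ} (h0 : θ 0 = 0) (h1 : θ 1 = K) :
    ∃ ι : ℝ → I, Monotone ι ∧ Continuous ι ∧ (∀ v ∈ Icc (0:ℝ) K, θ (ι v) = v) := by
  have h01 : (0:I) ≤ 1 := by norm_num
  have hK : (0:ℝ) < K := by rw [← h0, ← h1]; exact hsm (by norm_num)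
  have hmem : ∀ t : I, θ t ∈ Icc (0:ℝ) K := by
    intro t
    constructor
    · rw [← h0]; exact hsm.monotone (by exact Subtype.coe_le_coe.mp t.2.1)
    · rw [← h1]; exact hsm.monotone (by exact Subtype.coe_le_coe.mp t.2.2)
  set θ' : I → Icc (0:ℝ) K := fun t => ⟨θ t, hmem t⟩ with hθ'
  have hsurj : Function.Surjective θ' := by
    intro v
    have htoI : Continuous (fun x : ℝ => θ (toI x)) := hcont.comp toI_continuous
    have hIcc : Icc (θ (toI 0)) (θ (toI 1)) ⊆ (fun x : ℝ => θ (toI x)) '' (Icc 0 1) :=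
      intermediate_value_Icc zero_le_one htoI.continuousOn
    have : (v : ℝ) ∈ Icc (θ (toI 0)) (θ (toI 1)) := by
      rw [toI_zero, toI_one, h0, h1]; exact v.2
    obtain ⟨t, _, ht⟩ := hIcc this
    exact ⟨toI t, Subtype.ext ht⟩
  have hinj : Function.Injective θ' := by
    intro a b hab
    exact hsm.injective (by simpa [hθ', Subtype.ext_iff] using hab)
  set e : I ≃ Icc (0:ℝ) K := Equiv.ofBijective θ' ⟨hinj, hsurj⟩ with he
  have hecont : Continuous (e : I → Icc (0:ℝ) K) := Continuous.subtype_mk hcont _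
  set E : I ≃ₜ Icc (0:ℝ) K := Continuous.homeoOfEquivCompactToT2 (f := e) hecont with hE
  set ι : ℝ → I := fun v => E.symm (projIcc 0 K hK.le v) with hι
  have key : ∀ v, θ (ι v) = ((projIcc 0 K hK.le v : Icc (0:ℝ) K) : ℝ) := by
    intro v
    have : e (E.symm (projIcc 0 K hK.le v)) = projIcc 0 K hK.le v := E.apply_symm_apply _
    exact congrArg Subtype.val this
  refine ⟨ι, ?_, ?_, ?_⟩
  · intro a b hab
    by_contra hcon
    push_neg at hcon
    have : θ (ι b) < θ (ι a) := hsm hcon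
    rw [key a, key b] at this
    exact absurd (monotone_projIcc hK.le hab) (by exact_mod_cast not_le.mpr this)
  · exact E.symm.continuous.comp (@continuous_projIcc ℝ _ 0 K hK.le _ _)
  · intro v hv
    rw [key v, projIcc_of_mem hK.le hv]

/-- Two continuous maps on `I` agreeing on positive arguments agree everywhere. -/
lemma eq_of_eq_pos [T2Space β] {h₁ h₂ : I → β} (hc1 : Continuous h₁) (hc2 : Continuous h₂)
    (h : ∀ s : I, 0 < (s : ℝ) → h₁ s = h₂ s) (s : I) : h₁ s = h₂ s := by
  rcases lt_or_eq_of_le s.2.1 with hs | hs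
  · exact h s hs
  · have hs0 : s = 0 := Subtype.ext hs.symm
    subst hs0
    have hseq : ∀ n : ℕ, (0:ℝ) < ((toI (1 / ((n:ℝ) + 1)) : I) : ℝ) := by
      intro n
      rw [toI_of_mem (by positivity) (by rw [div_le_one (by positivity)]; linarith)]
      positivity
    have htend : Filter.Tendsto (fun n : ℕ => toI (1 / ((n:ℝ) + 1)))
        Filter.atTop (nhds (0 : I)) := by
      have h1 : Filter.Tendsto (fun n : ℕ => 1 / ((n:ℝ) + 1)) Filter.atTop (nhds 0) :=
        tendsto_one_div_add_atTop_nhds_zero_nat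
      have := (toI_continuous.tendsto 0).comp h1
      rwa [toI_zero] at this
    have t1 : Filter.Tendsto (fun n : ℕ => h₁ (toI (1 / ((n:ℝ) + 1))))
        Filter.atTop (nhds (h₁ 0)) := (hc1.tendsto 0).comp htend
    have t2 : Filter.Tendsto (fun n : ℕ => h₁ (toI (1 / ((n:ℝ) + 1))))
        Filter.atTop (nhds (h₂ 0)) := by
      have t2' : Filter.Tendsto (fun n : ℕ => h₂ (toI (1 / ((n:ℝ) + 1))))
          Filter.atTop (nhds (h₂ 0)) := (hc2.tendsto 0).comp htend
      refine t2'.congr fun n => ?_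
      exact (h _ (hseq n)).symm
    exact tendsto_nhds_unique t1 t2

/-- Consecutive longitudinal paths in the globular decomposition of a continuous path
match at the junctions. -/
lemma moore_junction [T2Space β] {m : ℕ} (L : Fin (m+1) → I → β)
    (hLcont : ∀ i, Continuous (L i))
    {φ : I → ℝ} (hφm : Monotone φ) (hφc : Continuous φ) (hφ0 : φ 0 = 0)
    (hφ1 : φ 1 = (m:ℝ) + 1)
    {γ : I → β} (hγc : Continuous γ)
    (hγ : ∀ t : I, γ t = mooreCompN m (fun _ => 1) (fun i s => L i (toI s)) (φ t))
    (i : Fin m) : L i.castSucc 1 = L i.succ 0 := by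
  set K : ℝ := (m:ℝ) + 1 with hK
  have hmemφ : ∀ t : I, φ t ∈ Icc (0:ℝ) K := by
    intro t
    constructor
    · rw [← hφ0]; exact hφm (by exact Subtype.coe_le_coe.mp t.2.1)
    · rw [← hφ1]; exact hφm (by exact Subtype.coe_le_coe.mp t.2.2)
  set W : Icc (0:ℝ) K → β :=
    fun u => mooreCompN m (fun _ => 1) (fun i s => L i (toI s)) u with hW
  set φ' : I → Icc (0:ℝ) K := fun t => ⟨φ t, hmemφ t⟩ with hφ'
  have hφ'surj : Function.Surjective φ' := by
    intro v
    have htoI : Continuous (fun x : ℝ => φ (toI x)) := hφc.comp toI_continuous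
    have hIcc : Icc (φ (toI 0)) (φ (toI 1)) ⊆ (fun x : ℝ => φ (toI x)) '' (Icc 0 1) :=
      intermediate_value_Icc zero_le_one htoI.continuousOn
    have : (v : ℝ) ∈ Icc (φ (toI 0)) (φ (toI 1)) := by
      rw [toI_zero, toI_one, hφ0, hφ1]; exact v.2
    obtain ⟨t, _, ht⟩ := hIcc this
    exact ⟨toI t, Subtype.ext ht⟩
  have hq : IsQuotientMap φ' :=
    IsQuotientMap.of_surjective_continuous hφ'surj (hφc.subtype_mk _)
  have hWc : Continuous W := by
    rw [hq.continuous_iff]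
    have : W ∘ φ' = γ := by
      funext t
      exact (hγ t).symm
    rw [this]
    exact hγc
  have him : (i:ℝ) + 1 ≤ (m:ℝ) := by
    have : (i:ℕ) < m := i.2
    exact_mod_cast Nat.succ_le_of_lt this
  set P : Icc (0:ℝ) K := ⟨(i:ℝ) + 1, ⟨by positivity, by rw [hK]; linarith⟩⟩ with hP
  set u : ℕ → Icc (0:ℝ) K := fun n =>
    ⟨(i:ℝ) + 1 + 1 / ((n:ℝ) + 1),
      ⟨by positivity, by
        rw [hK]
        have h1 : 1 / ((n:ℝ) + 1) ≤ 1 := by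
          rw [div_le_one (by positivity)]; linarith
        linarith⟩⟩ with hu
  have htendreal : Filter.Tendsto (fun n : ℕ => (i:ℝ) + 1 + 1 / ((n:ℝ) + 1))
      Filter.atTop (nhds ((i:ℝ) + 1)) := by
    have := tendsto_const_nhds (x := (i:ℝ) + 1) (f := Filter.atTop (α := ℕ))
      |>.add tendsto_one_div_add_atTop_nhds_zero_nat
    simpa using this
  have htend : Filter.Tendsto u Filter.atTop (nhds P) := by
    rw [tendsto_subtype_rng]
    exact htendreal
  have hWu : ∀ n : ℕ, W (u n) = L i.succ (toI (1 / ((n:ℝ) + 1))) := by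
    intro n
    have hcast : ((i.succ : Fin (m+1)) : ℝ) = (i:ℝ) + 1 := by
      push_cast [Fin.val_succ]; ring
    have h1 : ((i.succ : Fin (m+1)) : ℝ) < ((u n : ℝ)) := by
      rw [hcast]
      have : (0:ℝ) < 1 / ((n:ℝ) + 1) := by positivity
      show ((i:ℝ)+1) < (i:ℝ) + 1 + 1 / ((n:ℝ) + 1)
      linarith
    have h2 : ((u n : ℝ)) ≤ ((i.succ : Fin (m+1)) : ℝ) + 1 := by
      rw [hcast]
      have : 1 / ((n:ℝ) + 1) ≤ 1 := by
        rw [div_le_one (by positivity)]; linarith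
      show (i:ℝ) + 1 + 1 / ((n:ℝ) + 1) ≤ (i:ℝ) + 1 + 1
      linarith
    have e1 : W (u n) = L i.succ (toI (((u n) : ℝ) - ((i.succ : Fin (m+1)) : ℝ))) :=
      mooreCompN_unit_piece m (fun j s => L j (toI s)) i.succ h1 h2
    have e2 : (((u n) : ℝ)) - ((i.succ : Fin (m+1)) : ℝ) = 1 / ((n:ℝ) + 1) := by
      rw [hcast]
      show ((i:ℝ) + 1 + 1 / ((n:ℝ) + 1)) - ((i:ℝ) + 1) = 1 / ((n:ℝ) + 1)
      ring
    rw [e1, e2]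
  have hWP : W P = L i.castSucc 1 := by
    have hcast : ((i.castSucc : Fin (m+1)) : ℝ) = (i:ℝ) := by
      simp [Fin.coe_castSucc]
    have h1 : ((i.castSucc : Fin (m+1)) : ℝ) < ((P : ℝ)) := by
      rw [hcast]; show (i:ℝ) < (i:ℝ) + 1; linarith
    have h2 : ((P : ℝ)) ≤ ((i.castSucc : Fin (m+1)) : ℝ) + 1 := by
      rw [hcast]
    have e1 : W P = L i.castSucc (toI ((P : ℝ) - ((i.castSucc : Fin (m+1)) : ℝ))) :=
      mooreCompN_unit_piece m (fun j s => L j (toI s)) i.castSucc h1 h2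
    have e2 : ((P : ℝ)) - ((i.castSucc : Fin (m+1)) : ℝ) = 1 := by
      rw [hcast]
      show ((i:ℝ) + 1) - (i:ℝ) = 1
      ring
    rw [e1, e2, toI_one]
  have t1 : Filter.Tendsto (fun n => W (u n)) Filter.atTop (nhds (W P)) :=
    (hWc.tendsto P).comp htend
  have t2 : Filter.Tendsto (fun n => W (u n)) Filter.atTop (nhds (L i.succ 0)) := by
    have h1 : Filter.Tendsto (fun n : ℕ => 1 / ((n:ℝ) + 1)) Filter.atTop (nhds 0) :=
      tendsto_one_div_add_atTop_nhds_zero_nat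
    have h2 : Filter.Tendsto (fun n : ℕ => L i.succ (toI (1 / ((n:ℝ) + 1))))
        Filter.atTop (nhds (L i.succ (toI 0))) :=
      (((hLcont i.succ).comp toI_continuous).tendsto 0).comp h1
    rw [toI_zero] at h2
    exact Filter.Tendsto.congr (fun n => (hWu n).symm) h2
  have := tendsto_nhds_unique t1 t2
  rw [hWP] at this
  exact this

/-- Covering data: the `g`-image of a longitudinal path of a cell of `Y` follows a
longitudinal path of a cell of `X`, monotonically and continuously. -/
structure CoverData (X : CellularMDSpace α) (h : I → α) where
  d : X.ι
  w : EuclideanSpace ℝ (Fin (X.cell d).n)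
  hw : ‖w‖ < 1
  ω : I → I
  mono : Monotone ω
  cont : Continuous ω
  pos : ∀ s : I, 0 < (s : ℝ) → 0 < (ω s : ℝ)
  lt1 : ∀ s : I, (s : ℝ) < 1 → (ω s : ℝ) < 1
  eq : ∀ s, h s = (X.cell d).g w (ω s)

lemma exists_cover (X : CellularMDSpace α) (Y : CellularMDSpace β) (f : α → β) (g : β → α)
    (hf : IsMDMap X.toMultipointedDSpace Y.toMultipointedDSpace f)
    (hgl : Function.LeftInverse g f) (hgr : Function.RightInverse g f)
    (c : Y.ι) (z : EuclideanSpace ℝ (Fin (Y.cell c).n)) (hz : ‖z‖ < 1) :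
    Nonempty (CoverData X (fun s => g ((Y.cell c).g z s))) := by
  haveI : T2Space α := X.t2
  haveI : T2Space β := Y.t2
  set half : I := ⟨1/2, by constructor <;> norm_num⟩ with hhalf
  have hhalf0 : (0:ℝ) < (half : ℝ) := by norm_num [hhalf]
  have hhalf1 : (half : ℝ) < 1 := by norm_num [hhalf]
  set y : β := (Y.cell c).g z half with hy
  have hyopen : y ∈ (Y.cell c).openCell := ⟨z, half, hz, hhalf0, hhalf1, rfl⟩
  have hyns : y ∉ Y.states := fun hmem =>
    Set.disjoint_left.mp (Y.cell_states_disjoint c) hyopen hmem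
  have hfgy : f (g y) = y := hgr y
  have hgyns : g y ∉ X.states := by
    intro hmem
    exact hyns (hfgy ▸ hf.2.1 hmem)
  have hgycell : g y ∈ ⋃ i, (X.cell i).openCell := by
    have : g y ∈ X.states ∪ ⋃ i, (X.cell i).openCell := by
      rw [X.cell_cover]; trivial
    rcases this with h | h
    · exact absurd h hgyns
    · exact h
  rw [Set.mem_iUnion] at hgycell
  obtain ⟨d, w, t₀, hw, ht₀0, ht₀1, hxeq⟩ := hgycell
  have hlamexec : (fun t => (X.cell d).g w t) ∈ X.exec := (X.cell d).exec_mem w hw.le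
  have hflam : (f ∘ fun t => (X.cell d).g w t) ∈ Y.exec := hf.2.2 _ hlamexec
  obtain ⟨k, c', z', θ, hz', hθm, hθc, hθ0, hθ1, hNθ⟩ := Y.exec_decomp _ hflam
  -- θ is strictly monotone
  have hθsm : StrictMono θ := by
    intro a b hab
    rcases lt_or_eq_of_le (hθm hab.le) with h | h
    · exact h
    exfalso
    have habR : (a:ℝ) < (b:ℝ) := hab
    have hconst : ∀ t : I, a ≤ t → t ≤ b → θ t = θ a :=
      fun t h1 h2 => le_antisymm (h ▸ hθm h2) (hθm h1)
    have hlamconst : ∀ t : I, a ≤ t → t ≤ b → (X.cell d).g w t = (X.cell d).g w a := by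
      intro t h1 h2
      have e1 : f ((X.cell d).g w t) = f ((X.cell d).g w a) := by
        have ea := hNθ t
        have eb := hNθ a
        simp only [Function.comp] at ea eb
        rw [ea, eb, hconst t h1 h2]
      have := congrArg g e1
      rwa [hgl, hgl] at this
    set a' : I := ⟨(a:ℝ) + ((b:ℝ) - (a:ℝ))/3, by
      constructor
      · have := a.2.1; linarith
      · have := b.2.2; linarith⟩ with ha'
    set b' : I := ⟨(a:ℝ) + 2*((b:ℝ) - (a:ℝ))/3, by
      constructor
      · have := a.2.1; linarith
      · have := b.2.2; linarith⟩ with hb'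
    have haa' : a ≤ a' := by
      rw [← Subtype.coe_le_coe]; show (a:ℝ) ≤ (a:ℝ) + ((b:ℝ) - (a:ℝ))/3; linarith
    have ha'b : a' ≤ b := by
      rw [← Subtype.coe_le_coe]; show (a:ℝ) + ((b:ℝ) - (a:ℝ))/3 ≤ (b:ℝ); linarith
    have hab' : a ≤ b' := by
      rw [← Subtype.coe_le_coe]; show (a:ℝ) ≤ (a:ℝ) + 2*((b:ℝ) - (a:ℝ))/3; linarith
    have hb'b : b' ≤ b := by
      rw [← Subtype.coe_le_coe]; show (a:ℝ) + 2*((b:ℝ) - (a:ℝ))/3 ≤ (b:ℝ); linarith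
    have ha'0 : 0 < (a':ℝ) := by
      show (0:ℝ) < (a:ℝ) + ((b:ℝ) - (a:ℝ))/3
      have := a.2.1; linarith
    have ha'1 : (a':ℝ) < 1 := by
      show (a:ℝ) + ((b:ℝ) - (a:ℝ))/3 < 1
      have := b.2.2; linarith
    have hb'0 : 0 < (b':ℝ) := by
      show (0:ℝ) < (a:ℝ) + 2*((b:ℝ) - (a:ℝ))/3
      have := a.2.1; linarith
    have hb'1 : (b':ℝ) < 1 := by
      show (a:ℝ) + 2*((b:ℝ) - (a:ℝ))/3 < 1
      have := b.2.2; linarith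
    have heqq : (X.cell d).g w a' = (X.cell d).g w b' :=
      (hlamconst a' haa' ha'b).trans (hlamconst b' hab' hb'b).symm
    have := ((X.cell d).g_inj w w a' b' hw hw ha'0 ha'1 hb'0 hb'1 heqq).2
    have : (a':ℝ) = (b':ℝ) := congrArg Subtype.val this
    simp only [ha', hb'] at this
    linarith
  obtain ⟨ι, hιm, hιc, hιsec⟩ := exists_section hθsm hθc hθ0 hθ1
  set u : ℝ := θ t₀ with hu
  have ht₀0' : (0:I) < t₀ := by rw [← Subtype.coe_lt_coe]; exact ht₀0
  have ht₀1' : t₀ < (1:I) := by rw [← Subtype.coe_lt_coe]; exact ht₀1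
  have hu0 : 0 < u := by rw [hu, ← hθ0]; exact hθsm ht₀0'
  have huK : u < (k:ℝ) + 1 := by rw [hu, ← hθ1]; exact hθsm ht₀1'
  have hj1 : 1 ≤ ⌈u⌉₊ := Nat.one_le_ceil_iff.mpr hu0
  have hjk : ⌈u⌉₊ ≤ k + 1 := Nat.ceil_le.mpr (by push_cast; exact huK.le)
  set jn : ℕ := ⌈u⌉₊ - 1 with hjn
  have hjnk : jn ≤ k := by omega
  have hjncast : (jn:ℝ) = (⌈u⌉₊:ℝ) - 1 := by
    rw [hjn, Nat.cast_sub hj1, Nat.cast_one]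
  have hjnlt : (jn:ℝ) < u := by
    have := Nat.ceil_lt_add_one hu0.le
    rw [hjncast]; linarith
  have hjnle : u ≤ (jn:ℝ) + 1 := by
    have := Nat.le_ceil u
    rw [hjncast]; linarith
  set j : Fin (k+1) := ⟨jn, by omega⟩ with hj
  have hjcast : ((j : Fin (k+1)) : ℝ) = (jn:ℝ) := rfl
  -- evaluate the decomposition at t₀
  have hft₀ : f ((X.cell d).g w t₀) = y := by rw [hxeq]; exact hfgy
  have hyN : (Y.cell (c' j)).g (z' j) (toI (u - (jn:ℝ))) = y := by
    have e0 := hNθ t₀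
    simp only [Function.comp] at e0
    have e1 := mooreCompN_unit_piece k
      (fun i s => (Y.cell (c' i)).g (z' i) (toI s)) j
      (u := u) (by rw [hjcast]; exact hjnlt) (by rw [hjcast]; exact hjnle)
    rw [← hu] at e0
    rw [e1] at e0
    have e2 : f ((X.cell d).g w t₀) = (Y.cell (c' j)).g (z' j) (toI (u - (jn:ℝ))) := e0
    exact e2.symm.trans hft₀
  set t'' : I := toI (u - (jn:ℝ)) with ht''
  have ht''coe : (t'' : ℝ) = u - (jn:ℝ) := toI_of_mem (by linarith) (by linarith)
  have ht''0 : 0 < (t'' : ℝ) := by rw [ht''coe]; linarith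
  have ht''1 : (t'' : ℝ) < 1 := by
    rcases lt_or_eq_of_le t''.2.2 with h | h
    · exact h
    exfalso
    have : (Y.cell (c' j)).g (z' j) t'' = (Y.cell (c' j)).tgt := by
      have : t'' = 1 := Subtype.ext h
      rw [this]
      exact (Y.cell (c' j)).g_tgt (z' j) (hz' j).le
    rw [hyN] at this
    exact hyns (this ▸ (Y.cell (c' j)).tgt_mem)
  have hcc : c' j = c := by
    by_contra hne
    exact Set.disjoint_left.mp (Y.cell_disjoint hne)
      ⟨z' j, t'', hz' j, ht''0, ht''1, hyN⟩ hyopen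
  subst hcc
  have hzz : z' j = z ∧ t'' = half :=
    (Y.cell (c' j)).g_inj (z' j) z t'' half (hz' j) hz ht''0 ht''1 hhalf0 hhalf1
      (by rw [hyN, hy])
  obtain ⟨hzz, -⟩ := hzz
  subst hzz
  -- build the cover data
  set ω : I → I := fun s => ι ((jn:ℝ) + (s:ℝ)) with hω
  have hωm : Monotone ω := fun s s' hss =>
    hιm (add_le_add_right (Subtype.coe_le_coe.mpr hss) _)
  have hωc : Continuous ω := hιc.comp (continuous_const.add continuous_subtype_val)
  have hmemj : ∀ s : I, (jn:ℝ) + (s:ℝ) ∈ Icc (0:ℝ) ((k:ℝ)+1) := by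
    intro s
    constructor
    · have := s.2.1; positivity
    · have h1 := s.2.2
      have h2 : (jn:ℝ) ≤ (k:ℝ) := by exact_mod_cast hjnk
      linarith
  have hθω : ∀ s : I, θ (ω s) = (jn:ℝ) + (s:ℝ) := fun s => hιsec _ (hmemj s)
  have hωpos : ∀ s : I, 0 < (s:ℝ) → 0 < (ω s : ℝ) := by
    intro s hs
    rcases lt_or_eq_of_le (ω s).2.1 with h | h
    · exact h
    exfalso
    have : ω s = 0 := Subtype.ext h.symm
    have e := hθω s
    rw [this, hθ0] at e
    have : (0:ℝ) ≤ (jn:ℝ) := by positivity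
    linarith
  have hωlt1 : ∀ s : I, (s:ℝ) < 1 → (ω s : ℝ) < 1 := by
    intro s hs
    rcases lt_or_eq_of_le (ω s).2.2 with h | h
    · exact h
    exfalso
    have : ω s = 1 := Subtype.ext h
    have e := hθω s
    rw [this, hθ1] at e
    have h2 : (jn:ℝ) ≤ (k:ℝ) := by exact_mod_cast hjnk
    linarith
  -- the defining equation
  have heq : ∀ s : I, g ((Y.cell (c' j)).g (z' j) s) = (X.cell d).g w (ω s) := by
    have hF₁c : Continuous (fun s : I => (Y.cell (c' j)).g (z' j) s) :=
      Y.exec_cont _ ((Y.cell (c' j)).exec_mem (z' j) (hz' j).le)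
    have hF₂c : Continuous (fun s : I => f ((X.cell d).g w (ω s))) :=
      (Y.exec_cont _ hflam).comp hωc
    have hpos : ∀ s : I, 0 < (s:ℝ) →
        (Y.cell (c' j)).g (z' j) s = f ((X.cell d).g w (ω s)) := by
      intro s hs
      have e0 := hNθ (ω s)
      simp only [Function.comp] at e0
      rw [hθω s] at e0
      have e1 := mooreCompN_unit_piece k
        (fun i s => (Y.cell (c' i)).g (z' i) (toI s)) j
        (u := (jn:ℝ) + (s:ℝ))
        (by rw [hjcast]; linarith)
        (by rw [hjcast]; have := s.2.2; linarith)
      have e3 : f ((X.cell d).g w (ω s))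
          = (Y.cell (c' j)).g (z' j) (toI ((jn:ℝ) + (s:ℝ) - (jn:ℝ))) := e0.trans e1
      have e2 : (jn:ℝ) + (s:ℝ) - (jn:ℝ) = (s:ℝ) := by ring
      rw [e2, toI_coe] at e3
      exact e3.symm
    have hall := eq_of_eq_pos hF₁c hF₂c hpos
    intro s
    rw [hall s]
    exact hgl _
  exact ⟨⟨d, w, hw, ω, hωm, hωc, hωpos, hωlt1, heq⟩⟩

/-- Matching of two consecutive covering pieces: either they lie on the same
longitudinal path of the same cell with matching positions, or the first ends exactly
at the end of its cell path and the second starts at the beginning of its cell path. -/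
lemma cover_merge (X : CellularMDSpace α)
    (d d' : X.ι) (w : EuclideanSpace ℝ (Fin (X.cell d).n))
    (w' : EuclideanSpace ℝ (Fin (X.cell d').n))
    (hw : ‖w‖ < 1) (hw' : ‖w'‖ < 1) (a b : I)
    (ha : 0 < (a:ℝ)) (hb : (b:ℝ) < 1)
    (A : (X.cell d).g w a = (X.cell d').g w' b) :
    ((∀ s : I, (X.cell d').g w' s = (X.cell d).g w s) ∧ a = b) ∨
      ((a:ℝ) = 1 ∧ (b:ℝ) = 0) := by
  rcases lt_or_eq_of_le a.2.2 with ha1 | ha1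
  · -- `a` is interior: the common point is in the open cell of `d`
    left
    have hmem : (X.cell d).g w a ∈ (X.cell d).openCell := ⟨w, a, hw, ha, ha1, rfl⟩
    have hb0 : 0 < (b:ℝ) := by
      rcases lt_or_eq_of_le b.2.1 with h | h
      · exact h
      exfalso
      have hbz : b = 0 := Subtype.ext h.symm
      have : (X.cell d').g w' b = (X.cell d').src := by
        rw [hbz]; exact (X.cell d').g_src w' hw'.le
      rw [← A] at this
      exact Set.disjoint_left.mp (X.cell_states_disjoint d) hmem
        (this ▸ (X.cell d').src_mem)
    have hmem' : (X.cell d).g w a ∈ (X.cell d').openCell := ⟨w', b, hw', hb0, hb, A.symm⟩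
    have hdd : d = d' := by
      by_contra hne
      exact Set.disjoint_left.mp (X.cell_disjoint hne) hmem hmem'
    subst hdd
    obtain ⟨hww, hab⟩ := (X.cell d).g_inj w w' a b hw hw' ha ha1 hb0 hb A
    subst hww
    exact ⟨fun s => rfl, hab⟩
  · -- `a = 1`: the common point is a state
    have ha1' : a = 1 := Subtype.ext ha1
    have hstate : (X.cell d).g w a ∈ X.states := by
      rw [ha1']
      rw [(X.cell d).g_tgt w hw.le]
      exact (X.cell d).tgt_mem
    have hb0 : (b:ℝ) = 0 := by
      rcases lt_or_eq_of_le b.2.1 with h | h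
      · exfalso
        have hmem' : (X.cell d).g w a ∈ (X.cell d').openCell := ⟨w', b, hw', h, hb, A.symm⟩
        exact Set.disjoint_left.mp (X.cell_states_disjoint d') hmem' hstate
      · exact h.symm
    exact Or.inr ⟨ha1, hb0⟩

/-- Assembling the covering data of the successive cells traversed by an execution
path of `Y` into a single execution path of `X` together with a monotone continuous
time reparametrization. -/
lemma assemble (X : CellularMDSpace α) (g : β → α) :
    ∀ (m : ℕ) (L : Fin (m+1) → I → β)
      (cov : ∀ i, CoverData X (fun s => g (L i s)))
      (hjun : ∀ i : Fin m, L i.castSucc 1 = L i.succ 0),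
      ∃ γ' ∈ X.exec, ∃ Ψ : ℝ → I, Monotone Ψ ∧ Continuous Ψ ∧
        (∀ u : ℝ, u ≤ (m:ℝ) + 1 →
          γ' (Ψ u) = g (mooreCompN m (fun _ => 1) (fun i s => L i (toI s)) u)) ∧
        ∃ ρ : I → I, Monotone ρ ∧ Continuous ρ ∧ ρ 0 = 0 ∧
          (∀ s, γ' (ρ s) = (X.cell (cov 0).d).g (cov 0).w s) ∧
          Ψ 0 = ρ ((cov 0).ω 0) := by
  intro m
  induction m with
  | zero =>
    intro L cov hjun
    refine ⟨(fun s => (X.cell (cov 0).d).g (cov 0).w s),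
      (X.cell (cov 0).d).exec_mem _ (cov 0).hw.le,
      fun u => (cov 0).ω (toI u), (cov 0).mono.comp toI_monotone,
      (cov 0).cont.comp toI_continuous, ?_,
      id, monotone_id, continuous_id, rfl, fun s => rfl, ?_⟩
    · intro u hu
      have h0 : mooreCompN 0 (fun _ => (1:ℝ)) (fun i s => L i (toI s)) u = L 0 (toI u) := rfl
      rw [h0]
      exact ((cov 0).eq (toI u)).symm
    · show (cov 0).ω (toI 0) = (cov 0).ω 0
      rw [toI_zero]
  | succ m ih =>
    intro L cov hjun
    set Lt : Fin (m+1) → I → β := fun i => L i.succ with hLt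
    set covt : ∀ i : Fin (m+1), CoverData X (fun s => g (Lt i s)) :=
      fun i => cov i.succ with hcovt
    have hjunt : ∀ i : Fin m, Lt i.castSucc 1 = Lt i.succ 0 := by
      intro i
      have h := hjun i.succ
      show L i.castSucc.succ 1 = L i.succ.succ 0
      rw [Fin.succ_castSucc]
      exact h
    obtain ⟨γt, hγtexec, Ψt, hΨtm, hΨtc, hΨtval, ρt, hρtm, hρtc, hρt0, hρteq, hΨt0⟩ :=
      ih Lt covt hjunt
    have hj0 : L (0 : Fin (m+2)) 1 = L (0 : Fin (m+1)).succ 0 := by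
      have h := hjun 0
      rwa [Fin.castSucc_zero] at h
    have hA : (X.cell (cov 0).d).g (cov 0).w ((cov 0).ω 1)
        = (X.cell (covt 0).d).g (covt 0).w ((covt 0).ω 0) := by
      have e1 := (cov 0).eq 1
      have e2 : g (L (0 : Fin (m+1)).succ 0)
          = (X.cell (covt 0).d).g (covt 0).w ((covt 0).ω 0) := (covt 0).eq 0
      rw [← e1, ← e2]
      exact congrArg g hj0
    have honeI : (0:ℝ) < ((1:I):ℝ) := by norm_num
    have hzeroI : ((0:I):ℝ) < 1 := by norm_num
    rcases cover_merge X (cov 0).d (covt 0).d (cov 0).w (covt 0).w (cov 0).hw (covt 0).hw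
      ((cov 0).ω 1) ((covt 0).ω 0) ((cov 0).pos 1 honeI) ((covt 0).lt1 0 hzeroI) hA with
      ⟨hfun, hωeq⟩ | ⟨hω1, hω'0⟩
    · -- merge case: same longitudinal path continues
      have hb : ρt ((cov 0).ω (toI 1)) = Ψt 0 := by
        rw [toI_one, hωeq]
        exact hΨt0.symm
      refine ⟨γt, hγtexec,
        fun u => if u ≤ 1 then ρt ((cov 0).ω (toI u)) else Ψt (u - 1),
        ?_, ?_, ?_, ρt, hρtm, hρtc, hρt0, ?_, ?_⟩
      · -- monotone
        intro u v huv
        by_cases hu : u ≤ 1 <;> by_cases hv : v ≤ 1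
        · simp only [if_pos hu, if_pos hv]
          exact hρtm ((cov 0).mono (toI_monotone huv))
        · simp only [if_pos hu, if_neg hv]
          calc ρt ((cov 0).ω (toI u)) ≤ ρt ((cov 0).ω (toI 1)) :=
                hρtm ((cov 0).mono (toI_monotone hu))
            _ = Ψt 0 := hb
            _ ≤ Ψt (v - 1) := hΨtm (by push_neg at hv; linarith)
        · exact absurd (huv.trans hv) hu
        · simp only [if_neg hu, if_neg hv]
          exact hΨtm (by linarith)
      · -- continuous
        refine Continuous.if_le ?_ ?_ continuous_id continuous_const ?_
        · exact hρtc.comp ((cov 0).cont.comp toI_continuous)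
        · exact hΨtc.comp (continuous_id.sub continuous_const)
        · intro u hu
          subst hu
          rw [hb]
          norm_num
      · -- values
        intro u hu2
        by_cases hu : u ≤ 1
        · simp only [if_pos hu]
          rw [mooreCompN_unit_first _ hu]
          rw [hρteq ((cov 0).ω (toI u)), hfun]
          exact ((cov 0).eq (toI u)).symm
        · simp only [if_neg hu]
          push_neg at hu
          have hL : mooreCompN (m+1) (fun _ => (1:ℝ)) (fun i s => L i (toI s)) u
              = mooreCompN m (fun _ => (1:ℝ)) (fun i s => Lt i (toI s)) (u - 1) := by
            show (if u ≤ 1 then L 0 (toI u)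
              else mooreCompN m _ (fun i => (fun i s => L i (toI s)) i.succ) (u - 1)) = _
            rw [if_neg (not_le.mpr hu)]
          rw [hL]
          exact hΨtval (u - 1) (by push_cast; push_cast at hu2; linarith)
      · -- first block
        intro s
        rw [hρteq s]
        exact hfun s
      · -- initial value
        show (if (0:ℝ) ≤ 1 then ρt ((cov 0).ω (toI 0)) else Ψt (0 - 1)) = ρt ((cov 0).ω 0)
        rw [if_pos (by norm_num), toI_zero]
    · -- chain case: start a new block with a normalized composition
      have hω1' : (cov 0).ω 1 = 1 := Subtype.ext hω1
      have hω'0' : (covt 0).ω 0 = 0 := Subtype.ext hω'0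
      set lam0 : I → α := fun s => (X.cell (cov 0).d).g (cov 0).w s with hlam0
      have hlam0exec : lam0 ∈ X.exec := (X.cell (cov 0).d).exec_mem _ (cov 0).hw.le
      have hmatch : lam0 1 = γt 0 := by
        have e1 : lam0 1 = (X.cell (covt 0).d).g (covt 0).w 0 := by
          show (X.cell (cov 0).d).g (cov 0).w 1 = _
          rw [← hω1', hA, hω'0']
        have e2 : γt 0 = (X.cell (covt 0).d).g (covt 0).w 0 := by
          have e := hρteq 0
          rw [hρt0] at e
          exact e
        rw [e1, ← e2]
      set γc : I → α := normComp lam0 γt with hγcdef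
      have hγcexec : γc ∈ X.exec := X.exec_norm _ hlam0exec _ hγtexec hmatch
      set lo : I → I := fun p => ⟨(p:ℝ)/2, by
        constructor
        · have := p.2.1; linarith
        · have := p.2.2; linarith⟩ with hlo
      set hi : I → I := fun p => ⟨1/2 + (p:ℝ)/2, by
        constructor
        · have := p.2.1; linarith
        · have := p.2.2; linarith⟩ with hhi
      have hlom : Monotone lo := by
        intro p q h
        rw [← Subtype.coe_le_coe]
        show (p:ℝ)/2 ≤ (q:ℝ)/2
        have := Subtype.coe_le_coe.mpr h
        linarith
      have hhim : Monotone hi := by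
        intro p q h
        rw [← Subtype.coe_le_coe]
        show 1/2 + (p:ℝ)/2 ≤ 1/2 + (q:ℝ)/2
        have := Subtype.coe_le_coe.mpr h
        linarith
      have hloc : Continuous lo :=
        Continuous.subtype_mk (continuous_subtype_val.div_const 2) _
      have hhic : Continuous hi :=
        Continuous.subtype_mk (continuous_const.add (continuous_subtype_val.div_const 2)) _
      have hγlo : ∀ p : I, γc (lo p) = lam0 p := by
        intro p
        show (if ((lo p : ℝ)) ≤ 1/2 then lam0 (toI (2 * (lo p : ℝ)))
          else γt (toI (2 * (lo p : ℝ) - 1))) = lam0 p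
        rw [if_pos (by show (p:ℝ)/2 ≤ 1/2; have := p.2.2; linarith)]
        have h2 : 2 * ((lo p : ℝ)) = (p:ℝ) := by show 2*((p:ℝ)/2) = _; ring
        rw [h2, toI_coe]
      have hγhi : ∀ p : I, γc (hi p) = γt p := by
        intro p
        by_cases hp : (p:ℝ) ≤ 0
        · have hp0 : p = 0 := Subtype.ext (le_antisymm hp p.2.1)
          subst hp0
          show (if ((hi 0 : ℝ)) ≤ 1/2 then lam0 (toI (2 * (hi 0 : ℝ)))
            else γt (toI (2 * (hi 0 : ℝ) - 1))) = γt 0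
          have hc : ((hi 0 : ℝ)) = 1/2 := by
            show 1/2 + ((0:I):ℝ)/2 = 1/2
            norm_num
          rw [if_pos (le_of_eq hc), hc]
          norm_num
          rw [toI_one]
          exact hmatch
        · push_neg at hp
          show (if ((hi p : ℝ)) ≤ 1/2 then lam0 (toI (2 * (hi p : ℝ)))
            else γt (toI (2 * (hi p : ℝ) - 1))) = γt p
          rw [if_neg (by show ¬ (1/2 + (p:ℝ)/2 ≤ 1/2); push_neg; linarith)]
          have h2 : 2 * ((hi p : ℝ)) - 1 = (p:ℝ) := by show 2*(1/2+(p:ℝ)/2) - 1 = _; ring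
          rw [h2, toI_coe]
      have hbdry : lo ((cov 0).ω (toI 1)) = hi (Ψt 0) := by
        rw [toI_one, hω1', hΨt0, hω'0', hρt0]
        apply Subtype.ext
        show ((1:I):ℝ)/2 = 1/2 + ((0:I):ℝ)/2
        norm_num
      refine ⟨γc, hγcexec,
        fun u => if u ≤ 1 then lo ((cov 0).ω (toI u)) else hi (Ψt (u - 1)),
        ?_, ?_, ?_, lo, hlom, hloc, ?_, ?_, ?_⟩
      · -- monotone
        intro u v huv
        by_cases hu : u ≤ 1 <;> by_cases hv : v ≤ 1
        · simp only [if_pos hu, if_pos hv]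
          exact hlom ((cov 0).mono (toI_monotone huv))
        · simp only [if_pos hu, if_neg hv]
          have hlohi : ∀ p q : I, lo p ≤ hi q := by
            intro p q
            rw [← Subtype.coe_le_coe]
            show (p:ℝ)/2 ≤ 1/2 + (q:ℝ)/2
            have h1 := p.2.2
            have h2 := q.2.1
            linarith
          exact hlohi _ _
        · exact absurd (huv.trans hv) hu
        · simp only [if_neg hu, if_neg hv]
          exact hhim (hΨtm (by linarith))
      · -- continuous
        refine Continuous.if_le ?_ ?_ continuous_id continuous_const ?_
        · exact hloc.comp ((cov 0).cont.comp toI_continuous)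
        · exact (hhic.comp hΨtc).comp (continuous_id.sub continuous_const)
        · intro u hu
          subst hu
          rw [hbdry]
          norm_num
      · -- values
        intro u hu2
        by_cases hu : u ≤ 1
        · simp only [if_pos hu]
          rw [mooreCompN_unit_first _ hu, hγlo]
          exact ((cov 0).eq (toI u)).symm
        · simp only [if_neg hu]
          push_neg at hu
          have hL : mooreCompN (m+1) (fun _ => (1:ℝ)) (fun i s => L i (toI s)) u
              = mooreCompN m (fun _ => (1:ℝ)) (fun i s => Lt i (toI s)) (u - 1) := by
            show (if u ≤ 1 then L 0 (toI u)
              else mooreCompN m _ (fun i => (fun i s => L i (toI s)) i.succ) (u - 1)) = _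
            rw [if_neg (not_le.mpr hu)]
          rw [hL, hγhi]
          exact hΨtval (u - 1) (by push_cast; push_cast at hu2; linarith)
      · -- lo 0 = 0
        apply Subtype.ext
        show ((0:I):ℝ)/2 = ((0:I):ℝ)
        norm_num
      · -- first block
        intro s
        rw [hγlo s]
      · -- initial value
        show (if (0:ℝ) ≤ 1 then lo ((cov 0).ω (toI 0)) else hi (Ψt (0 - 1)))
          = lo ((cov 0).ω 0)
        rw [if_pos (by norm_num), toI_zero]

/-- The key lemma: the inverse of a globular subdivision carries execution paths of `Y`
to reparametrized execution paths of `X`. -/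
lemma crux (X : CellularMDSpace α) (Y : CellularMDSpace β) (f : α → β) (g : β → α)
    (hf : IsMDMap X.toMultipointedDSpace Y.toMultipointedDSpace f)
    (hgl : Function.LeftInverse g f) (hgr : Function.RightInverse g f)
    {γ : I → β} (hγ : γ ∈ Y.exec) :
    ∃ γ' ∈ X.exec, ∃ Φ : I → I, Monotone Φ ∧ Continuous Φ ∧
      ∀ t, g (γ t) = γ' (Φ t) := by
  haveI : T2Space β := Y.t2
  obtain ⟨m, c, z, φ, hz, hφm, hφc, hφ0, hφ1, heq⟩ := Y.exec_decomp γ hγ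
  have hLcont : ∀ i : Fin (m+1), Continuous (fun s => (Y.cell (c i)).g (z i) s) :=
    fun i => Y.exec_cont _ ((Y.cell (c i)).exec_mem (z i) (hz i).le)
  have hjun : ∀ i : Fin m, (fun i : Fin (m+1) => fun s => (Y.cell (c i)).g (z i) s)
      i.castSucc 1 = (fun i : Fin (m+1) => fun s => (Y.cell (c i)).g (z i) s) i.succ 0 :=
    moore_junction _ hLcont hφm hφc hφ0 hφ1 (Y.exec_cont γ hγ) heq
  have cov : ∀ i, CoverData X (fun s => g ((Y.cell (c i)).g (z i) s)) :=
    fun i => (exists_cover X Y f g hf hgl hgr (c i) (z i) (hz i)).some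
  obtain ⟨γ', hexec, Ψ, hΨm, hΨc, hΨval, -⟩ :=
    assemble X g m (fun i => fun s => (Y.cell (c i)).g (z i) s) cov hjun
  refine ⟨γ', hexec, fun t => Ψ (φ t), hΨm.comp hφm, hΨc.comp hφc, ?_⟩
  intro t
  have hub : φ t ≤ (m:ℝ) + 1 := by
    rw [← hφ1]
    exact hφm (Subtype.coe_le_coe.mp t.2.2)
  rw [heq t]
  exact (hΨval (φ t) hub).symm

end Aux

theorem globular_subdivision_iff_sp_iso (X : CellularMDSpace α) (Y : CellularMDSpace β)
    (f : α → β) (hf : IsMDMap X.toMultipointedDSpace Y.toMultipointedDSpace f) :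
    IsHomeomorph f ↔
      ∃ g : β → α, Continuous g ∧ Function.LeftInverse g f ∧ Function.RightInverse g f ∧
        (∀ Γ ∈ dPaths X.toMultipointedDSpace, f ∘ Γ ∈ dPaths Y.toMultipointedDSpace) ∧
        (∀ Γ ∈ dPaths Y.toMultipointedDSpace, g ∘ Γ ∈ dPaths X.toMultipointedDSpace) := by
  constructor
  · intro hhomeo
    obtain ⟨hfc, g, hgl, hgr, hgc⟩ := isHomeomorph_iff_exists_inverse.mp hhomeo
    refine ⟨g, hgc, hgl, hgr, ?_, ?_⟩
    · -- f pushes d-paths forward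
      rintro Γ (⟨x, hx⟩ | ⟨n, ℓ, γs, φs, hpos, hsum, hexec, hnd, heq⟩)
      · exact Or.inl ⟨f x, fun t => congrArg f (hx t)⟩
      · refine Or.inr ⟨n, ℓ, fun i => f ∘ γs i, φs, hpos, hsum,
          fun i => hf.2.2 _ (hexec i), hnd, fun t => ?_⟩
        show f (Γ t) = _
        rw [heq t, mooreCompN_map f]
        exact mooreCompN_congr n ℓ _ _ (fun i s => rfl) _
    · -- g pulls d-paths back
      rintro Γ (⟨x, hx⟩ | ⟨n, ℓ, γs, φs, hpos, hsum, hexec, hnd, heq⟩)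
      · exact Or.inl ⟨g x, fun t => congrArg g (hx t)⟩
      · choose γ' hexec' Φ hΦm hΦc hcov using
          fun i => crux X Y f g hf hgl hgr (hexec i)
        refine Or.inr ⟨n, ℓ, γ', fun i => Φ i ∘ φs i, hpos, hsum, hexec',
          fun i => ⟨(hΦm i).comp (hnd i).1, (hΦc i).comp (hnd i).2⟩, fun t => ?_⟩
        show g (Γ t) = _
        rw [heq t, mooreCompN_map g]
        exact mooreCompN_congr n ℓ _ _ (fun i s => hcov i _) _
  · rintro ⟨g, hgc, hgl, hgr, -, -⟩
    exact isHomeomorph_iff_exists_inverse.mpr ⟨hf.1, g, hgl, hgr, hgc⟩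

end
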